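/- arXiv:2310.18041 — 3 statements merged into one kernel-verified Lean document; each statement's English description precedes it below -/
import Mathlib

section
/- Let I = (−ρ, ρ) where 0 < ρ ≤ ∞, and let k be a positive integer. A function f : I → ℝ satisfies: for every n ≥ k and every A ∈ S_n^{(k)}(I), the entrywise transform f[A] is positive semidefinite (i.e., lies in S_n^{(0)}), if and only if f is a non-negative constant, f(x) = c for all x ∈ I for some c ≥ 0. -/
/-- The number of negative eigenvalues (with multiplicity) of a real symmetric
(Hermitian) matrix; junk value `0` if the matrix is not Hermitian. -/
noncomputable def negEigCount {n : Type*} [Fintype n] [DecidableEq n]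
    (A : Matrix n n ℝ) : ℕ :=
  if hA : A.IsHermitian then Nat.card {i // hA.eigenvalues i < 0} else 0

/-- Membership in the interval `(-ρ, ρ)` for `ρ : EReal` (so `ρ = ∞` is allowed). -/
def memI (ρ : EReal) (x : ℝ) : Prop := -ρ < (x : EReal) ∧ (x : EReal) < ρ

open Polynomial Matrix

-- charpoly conj lemma
lemma charpoly_conj_units {n : Type*} [Fintype n] [DecidableEq n] {R : Type*} [CommRing R]
    (U V A : Matrix n n R) (hUV : U * V = 1) (hVU : V * U = 1) :
    (U * A * V).charpoly = A.charpoly := by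
  have hmap : ∀ M N : Matrix n n R, ((M * N).map (C : R →+* R[X]) : Matrix n n R[X])
      = M.map C * N.map C := fun M N => by
    simpa using (RingHom.mapMatrix (C : R →+* R[X])).map_mul M N
  have key : charmatrix (U * A * V) = U.map C * charmatrix A * V.map C := by
    unfold charmatrix
    simp only [RingHom.mapMatrix_apply]
    rw [hmap, hmap, mul_sub, sub_mul]
    congr 1
    have hc : Commute (scalar n (X : R[X])) (U.map C) :=
      scalar_commute _ (fun r' => Commute.all _ _) _
    rw [← hc.eq, mul_assoc, ← hmap, hUV]
    simp
  rw [Matrix.charpoly, key, det_mul, det_mul, Matrix.charpoly, mul_comm, ← mul_assoc, ← det_mul,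
    ← hmap, hVU]
  simp

lemma charmatrix_diagonal' {n : Type*} [Fintype n] [DecidableEq n] {R : Type*} [CommRing R]
    (d : n → R) : charmatrix (diagonal d) = diagonal (fun i => X - C (d i)) := by
  ext i j
  by_cases h : i = j
  · subst h; simp [charmatrix_apply_eq]
  · simp [charmatrix_apply_ne _ _ _ h, diagonal_apply_ne _ h]

lemma charpoly_diagonal' {n : Type*} [Fintype n] [DecidableEq n] {R : Type*} [CommRing R]
    (d : n → R) : (diagonal d).charpoly = ∏ i, (X - C (d i)) := by
  rw [Matrix.charpoly, charmatrix_diagonal', det_diagonal]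

lemma charpoly_hermitian {n : Type*} [Fintype n] [DecidableEq n] {A : Matrix n n ℝ}
    (hA : A.IsHermitian) :
    A.charpoly = ((Finset.univ.val.map hA.eigenvalues).map (fun r => X - C r)).prod := by
  have h1 : A.charpoly = (diagonal (RCLike.ofReal ∘ hA.eigenvalues) : Matrix n n ℝ).charpoly := by
    conv_lhs => rw [hA.spectral_theorem]
    exact charpoly_conj_units _ _ _
      ((Matrix.mem_unitaryGroup_iff).mp (hA.eigenvectorUnitary).2)
      ((Matrix.mem_unitaryGroup_iff').mp (hA.eigenvectorUnitary).2)
  rw [h1, charpoly_diagonal', Multiset.map_map]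
  rfl

lemma negEigCount_eq {n : Type*} [Fintype n] [DecidableEq n] {A : Matrix n n ℝ}
    (hA : A.IsHermitian) (s : Multiset ℝ)
    (h : A.charpoly = (s.map (fun r => X - C r)).prod) :
    negEigCount A = Multiset.card (s.filter (· < 0)) := by
  rw [negEigCount, dif_pos hA]
  have hroots : Finset.univ.val.map hA.eigenvalues = s := by
    have h2 := (charpoly_hermitian hA).symm.trans h
    have h3 := congrArg Polynomial.roots h2
    rwa [Polynomial.roots_multiset_prod_X_sub_C, Polynomial.roots_multiset_prod_X_sub_C] at h3
  rw [Nat.card_eq_fintype_card, Fintype.card_subtype, ← hroots, Multiset.filter_map,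
    Multiset.card_map]
  rfl

noncomputable def bmat (p q a : ℝ) (j : ℕ) : Matrix (Fin (2+j)) (Fin (2+j)) ℝ :=
  (Matrix.reindex finSumFinEquiv finSumFinEquiv)
    (Matrix.fromBlocks !![p,q;q,p] 0 0 (Matrix.diagonal (fun _ : Fin j => -a)))

lemma bmat_isSymm (p q a : ℝ) (j : ℕ) : (bmat p q a j).IsSymm := by
  unfold bmat
  rw [Matrix.IsSymm, Matrix.transpose_reindex, Matrix.fromBlocks_transpose,
    Matrix.transpose_zero, Matrix.diagonal_transpose]
  have h2 : (!![p,q;q,p] : Matrix (Fin 2) (Fin 2) ℝ)ᵀ = !![p,q;q,p] := by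
    ext i j'
    fin_cases i <;> fin_cases j' <;> rfl
  rw [h2, Matrix.transpose_zero]

lemma bmat_entry (p q a : ℝ) (j : ℕ) (i i' : Fin (2+j)) :
    bmat p q a j i i' = p ∨ bmat p q a j i i' = q ∨ bmat p q a j i i' = 0 ∨
      bmat p q a j i i' = -a := by
  unfold bmat
  rw [Matrix.reindex_apply, Matrix.submatrix_apply]
  rcases finSumFinEquiv.symm i with x | x <;> rcases finSumFinEquiv.symm i' with y | y
  · fin_cases x <;> fin_cases y <;> simp
  · simp
  · simp
  · by_cases h : x = y
    · subst h; simp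
    · simp [Matrix.fromBlocks, Matrix.diagonal_apply_ne _ h]

lemma bmat_charpoly (p q a : ℝ) (j : ℕ) :
    (bmat p q a j).charpoly =
      ((((p+q) ::ₘ (p-q) ::ₘ Multiset.replicate j (-a)).map (fun r => X - C r)).prod) := by
  unfold bmat
  rw [Matrix.charpoly_reindex, Matrix.charpoly_fromBlocks_zero₂₁, charpoly_diagonal']
  have h2 : (!![p,q;q,p] : Matrix (Fin 2) (Fin 2) ℝ).charpoly
      = (X - C (p+q)) * (X - C (p-q)) := by
    rw [Matrix.charpoly, Matrix.det_fin_two]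
    rw [charmatrix_apply_eq, charmatrix_apply_eq, charmatrix_apply_ne _ _ _ (by decide),
      charmatrix_apply_ne _ _ _ (by decide)]
    have : (!![p,q;q,p] : Matrix (Fin 2) (Fin 2) ℝ) 0 0 = p := rfl
    have e00 : (!![p,q;q,p] : Matrix (Fin 2) (Fin 2) ℝ) 0 0 = p := rfl
    have e01 : (!![p,q;q,p] : Matrix (Fin 2) (Fin 2) ℝ) 0 1 = q := rfl
    have e10 : (!![p,q;q,p] : Matrix (Fin 2) (Fin 2) ℝ) 1 0 = q := rfl
    have e11 : (!![p,q;q,p] : Matrix (Fin 2) (Fin 2) ℝ) 1 1 = p := rfl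
    rw [e00, e01, e10, e11, C_add, C_sub]
    ring
  rw [h2]
  simp only [Multiset.map_cons, Multiset.prod_cons, Multiset.map_replicate,
    Multiset.prod_replicate, Finset.prod_const, Finset.card_univ, Fintype.card_fin]
  ring

lemma memI_of_abs_le {ρ : EReal} {x b : ℝ} (h : |x| ≤ b) (hb : (b : EReal) < ρ) :
    memI ρ x := by
  obtain ⟨h1, h2⟩ := abs_le.mp h
  constructor
  · have : (-b : ℝ) ≤ (x : ℝ) := h1
    calc -ρ < -(b : EReal) := by rw [EReal.neg_lt_neg_iff]; exact hb
    _ = ((-b : ℝ) : EReal) := by rw [EReal.coe_neg]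
    _ ≤ (x : EReal) := EReal.coe_le_coe_iff.mpr this
  · exact lt_of_le_of_lt (EReal.coe_le_coe_iff.mpr h2) hb

lemma bmat_isHermitian (p q a : ℝ) (j : ℕ) : (bmat p q a j).IsHermitian := by
  rw [Matrix.IsHermitian, Matrix.conjTranspose_eq_transpose_of_trivial]
  exact bmat_isSymm p q a j

lemma bmat_negEigCount (p q a : ℝ) (j : ℕ) (ha : 0 < a) :
    negEigCount (bmat p q a j) =
      (if p + q < 0 then 1 else 0) + ((if p - q < 0 then 1 else 0) + j) := by
  rw [negEigCount_eq (bmat_isHermitian p q a j) _ (bmat_charpoly p q a j)]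
  have hrep : Multiset.filter (fun x => x < 0) (Multiset.replicate j (-a))
      = Multiset.replicate j (-a) := by
    refine Multiset.filter_eq_self.mpr fun b hb => ?_
    rw [Multiset.eq_of_mem_replicate hb]; linarith
  rw [Multiset.filter_cons, Multiset.filter_cons, hrep]
  by_cases h1 : p + q < 0 <;> by_cases h2 : p - q < 0 <;>
    simp [h1, h2, Multiset.card_replicate] <;> omega

lemma psd2 {x y : ℝ} (h : (!![x,y;y,x] : Matrix (Fin 2) (Fin 2) ℝ).PosSemidef) :
    0 ≤ x ∧ y ≤ x := by
  have h1 := h.dotProduct_mulVec_nonneg ![1, 0]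
  have h2 := h.dotProduct_mulVec_nonneg ![1, -1]
  simp [dotProduct, Matrix.mulVec, Fin.sum_univ_two] at h1 h2
  constructor <;> nlinarith

lemma bmat_corner (p q a : ℝ) (j : ℕ) (f : ℝ → ℝ)
    (h : ((bmat p q a j).map f).PosSemidef) :
    0 ≤ f p ∧ f q ≤ f p := by
  have hsub := h.submatrix (fun x : Fin 2 => finSumFinEquiv (Sum.inl x))
  have heq : ((bmat p q a j).map f).submatrix (fun x : Fin 2 => finSumFinEquiv (Sum.inl x))
      (fun x : Fin 2 => finSumFinEquiv (Sum.inl x)) = !![f p, f q; f q, f p] := by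
    ext i i'
    simp only [Matrix.submatrix_apply, Matrix.map_apply, bmat, Matrix.reindex_apply,
      Equiv.symm_apply_apply, Matrix.fromBlocks_apply₁₁]
    fin_cases i <;> fin_cases i' <;> rfl
  rw [heq] at hsub
  exact psd2 hsub

/-- Theorem A (the case `l = 0`): for positive `k`, the transform `f[-]` sends
`S_n^(k)((-ρ,ρ))` into the positive semidefinite matrices for all `n ≥ k` if and only if
`f` is a non-negative constant on `(-ρ,ρ)`. -/
theorem preserver_to_psd_iff (ρ : EReal) (hρ : 0 < ρ) (k : ℕ) (hk : 1 ≤ k) (f : ℝ → ℝ) :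
    (∀ n : ℕ, k ≤ n → ∀ A : Matrix (Fin n) (Fin n) ℝ,
        A.IsSymm → (∀ i j, memI ρ (A i j)) → negEigCount A = k →
        (A.map f).PosSemidef) ↔
    (∃ c : ℝ, 0 ≤ c ∧ ∀ x : ℝ, memI ρ x → f x = c) := by
  constructor
  · intro H
    -- key lemma
    have key : ∀ u a : ℝ, (a : EReal) < ρ → |u| ≤ a → 0 < a → 0 ≤ f a ∧ f u = f a := by
      intro u a haρ hua ha0
      obtain ⟨hu1, hu2⟩ := abs_le.mp hua
      have hmem : ∀ (p q : ℝ), |p| ≤ a → |q| ≤ a → ∀ (j : ℕ) (i i' : Fin (2+j)),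
          memI ρ (bmat p q a j i i') := by
        intro p q hp hq j i i'
        rcases bmat_entry p q a j i i' with h | h | h | h <;> rw [h] <;>
          refine memI_of_abs_le ?_ haρ
        · exact hp
        · exact hq
        · simpa using ha0.le
        · simp [abs_of_pos ha0]
      -- construction (ii): p = a, q = u, j = k
      have h2 : ((bmat a u a k).map f).PosSemidef := by
        apply H (2 + k) (by omega) _ (bmat_isSymm a u a k)
          (hmem a u (by simp [abs_of_pos ha0]) hua k)
        rw [bmat_negEigCount a u a k ha0]
        have hx : ¬ (a + u < 0) := by linarith
        have hy : ¬ (a - u < 0) := by linarith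
        rw [if_neg hx, if_neg hy]
        omega
      obtain ⟨hfa, hfua⟩ := bmat_corner a u a k f h2
      rcases eq_or_lt_of_le hu2 with he | hlt
      · exact ⟨hfa, by rw [he]⟩
      -- construction (i): p = u, q = a, j = k - 1
      have h1 : ((bmat u a a (k-1)).map f).PosSemidef := by
        apply H (2 + (k-1)) (by omega) _ (bmat_isSymm u a a (k-1))
          (hmem u a hua (by simp [abs_of_pos ha0]) (k-1))
        rw [bmat_negEigCount u a a (k-1) ha0]
        have hx : ¬ (u + a < 0) := by linarith
        have hy : u - a < 0 := by linarith
        rw [if_neg hx, if_pos hy]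
        omega
      obtain ⟨hfu, hfau⟩ := bmat_corner u a a (k-1) f h1
      exact ⟨hfa, le_antisymm hfua hfau⟩
    -- pick base point
    obtain ⟨a₀, ha₀0, ha₀ρ⟩ := EReal.exists_between_coe_real hρ
    have ha₀0' : (0:ℝ) < a₀ := by exact_mod_cast ha₀0
    have hgen : ∀ x : ℝ, memI ρ x → f x = f a₀ := by
      intro x hx
      have habs : ((|x| : ℝ) : EReal) < ρ := by
        rcases abs_choice x with h | h <;> rw [h]
        · exact hx.2
        · rw [EReal.coe_neg]; exact EReal.neg_lt_comm.mp hx.1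
      have hb : ((max |x| a₀ : ℝ) : EReal) < ρ := by
        rcases max_choice |x| a₀ with h | h <;> rw [h]
        · exact habs
        · exact ha₀ρ
      obtain ⟨a, hba, haρ⟩ := EReal.exists_between_coe_real hb
      have hba' : max |x| a₀ < a := by exact_mod_cast hba
      have ha0 : 0 < a := lt_of_lt_of_le ha₀0' ((le_max_right _ _).trans hba'.le)
      have k1 := key x a haρ ((le_max_left _ _).trans hba'.le) ha0
      have k2 := key a₀ a haρ (by rw [abs_of_pos ha₀0']; exact (le_max_right _ _).trans hba'.le) ha0
      rw [k1.2, k2.2]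
    have hnn : 0 ≤ f a₀ := by
      obtain ⟨a₁, h1, h2⟩ := EReal.exists_between_coe_real ha₀ρ
      have h1' : a₀ < a₁ := by exact_mod_cast h1
      have := key a₀ a₁ h2 (by rw [abs_of_pos ha₀0']; exact h1'.le) (ha₀0'.trans h1')
      rw [this.2]; exact this.1
    exact ⟨f a₀, hnn, hgen⟩
  · rintro ⟨c, hc0, hc⟩ n hn A hsym hmem hneg
    have hA : A.map f = Matrix.of (fun _ _ => c) := by
      ext i j
      simp [Matrix.map_apply, hc _ (hmem i j)]
    rw [hA]
    refine Matrix.PosSemidef.of_dotProduct_mulVec_nonneg ?_ ?_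
    · rw [Matrix.IsHermitian]; ext i j; simp [Matrix.conjTranspose_apply]
    · intro x
      have h1 : (Matrix.of (fun _ _ => c) : Matrix (Fin n) (Fin n) ℝ) *ᵥ x
          = fun _ => c * ∑ j, x j := by
        ext i; simp [Matrix.mulVec, dotProduct, Finset.mul_sum]
      rw [h1]
      have h2 : star x ⬝ᵥ (fun _ => c * ∑ j, x j) = c * (∑ j, x j)^2 := by
        simp only [dotProduct, star_trivial]
        rw [← Finset.sum_mul]
        ring
      rw [h2]
      positivity
end

section
/- Let H be a separable real Hilbert space and J : H → H a bounded linear self-adjoint operator with J² = Id_H whose eigenspace {x ∈ H : Jx = −x} has finite dimension k, and let (v_j)_{j=1}^∞ be a sequence of vectors in H. Then there exists a threshold N such that the number of negative eigenvalues (counted with multiplicity) of the n×n Gram matrix (⟨v_i, J v_j⟩)_{i,j=1}^{n} is the same for all n ≥ N. -/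
section AuxPontryagin

open Matrix Finset

set_option linter.unusedSectionVars false

variable {H : Type*} [NormedAddCommGroup H] [InnerProductSpace ℝ H]

/-- The `n × n` Gram matrix of the first `n` vectors of `v` with respect to the form
`[x, y] = ⟪x, J y⟫`. -/
private def gram (J : H →L[ℝ] H) (v : ℕ → H) (n : ℕ) : Matrix (Fin n) (Fin n) ℝ :=
  Matrix.of fun i j : Fin n => (inner ℝ (v i.1) (J (v j.1)) : ℝ)

private lemma Jsym [CompleteSpace H] (J : H →L[ℝ] H) (hJsa : IsSelfAdjoint J) (x y : H) :
    (inner ℝ (J x) y : ℝ) = inner ℝ x (J y) := by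
  have h := ContinuousLinearMap.isSelfAdjoint_iff'.mp hJsa
  conv_lhs => rw [← h]
  exact ContinuousLinearMap.adjoint_inner_left J y x

private lemma gram_isHermitian [CompleteSpace H] (J : H →L[ℝ] H) (hJsa : IsSelfAdjoint J)
    (v : ℕ → H) (n : ℕ) : (gram J v n).IsHermitian := by
  ext i j
  simp only [Matrix.conjTranspose_apply, _root_.gram, Matrix.of_apply, star_trivial]
  rw [← Jsym J hJsa, real_inner_comm]

private lemma pairing (J : H →L[ℝ] H) (v : ℕ → H) {n : ℕ} (x y : Fin n → ℝ) :
    (inner ℝ (∑ j : Fin n, x j • v j.1) (J (∑ j : Fin n, y j • v j.1)) : ℝ)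
      = x ⬝ᵥ (gram J v n *ᵥ y) := by
  simp only [map_sum, _root_.map_smul, sum_inner, inner_sum, real_inner_smul_left,
    real_inner_smul_right, dotProduct, Matrix.mulVec, _root_.gram, Matrix.of_apply,
    Finset.mul_sum]
  rw [Finset.sum_comm]
  refine Finset.sum_congr rfl fun i _ => Finset.sum_congr rfl fun j _ => by ring

private lemma dotProduct_sum' {n : ℕ} {ι : Type*} [Fintype ι] (x : Fin n → ℝ)
    (f : ι → Fin n → ℝ) : x ⬝ᵥ (∑ s, f s) = ∑ s, x ⬝ᵥ f s := by
  simp only [dotProduct, Finset.sum_apply, Finset.mul_sum]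
  exact Finset.sum_comm

private lemma sum_dotProduct' {n : ℕ} {ι : Type*} [Fintype ι] (x : Fin n → ℝ)
    (f : ι → Fin n → ℝ) : (∑ s, f s) ⬝ᵥ x = ∑ s, f s ⬝ᵥ x := by
  simp only [dotProduct, Finset.sum_apply, Finset.sum_mul]
  exact Finset.sum_comm

private lemma mulVec_sum' {n : ℕ} {ι : Type*} [Fintype ι] (A : Matrix (Fin n) (Fin n) ℝ)
    (f : ι → Fin n → ℝ) : A *ᵥ (∑ s, f s) = ∑ s, A *ᵥ f s := by
  funext i
  simp only [Matrix.mulVec, Finset.sum_apply]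
  exact dotProduct_sum' _ _

/-- Evaluating the quadratic form of `A` on a combination of eigenvectors. -/
private lemma quad_eigen {n : ℕ} {A : Matrix (Fin n) (Fin n) ℝ} (hA : A.IsHermitian)
    {ι : Type*} [Fintype ι] (τ : ι → Fin n) (hτ : Function.Injective τ) (a : ι → ℝ) :
    (∑ s, a s • ⇑(hA.eigenvectorBasis (τ s))) ⬝ᵥ
      (A *ᵥ ∑ s, a s • ⇑(hA.eigenvectorBasis (τ s)))
      = ∑ s, hA.eigenvalues (τ s) * a s ^ 2 := by
  have horth : ∀ i j : Fin n, ⇑(hA.eigenvectorBasis i) ⬝ᵥ ⇑(hA.eigenvectorBasis j)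
      = if i = j then 1 else 0 := by
    intro i j
    have := (orthonormal_iff_ite.mp hA.eigenvectorBasis.orthonormal) i j
    rw [EuclideanSpace.inner_eq_star_dotProduct] at this
    rw [dotProduct_comm]
    simpa using this
  have hmv : A *ᵥ (∑ s, a s • ⇑(hA.eigenvectorBasis (τ s)))
      = ∑ s, a s • (hA.eigenvalues (τ s) • ⇑(hA.eigenvectorBasis (τ s))) := by
    rw [mulVec_sum']
    refine Finset.sum_congr rfl fun s _ => ?_
    rw [Matrix.mulVec_smul, hA.mulVec_eigenvectorBasis]
  rw [hmv, dotProduct_sum']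
  refine Finset.sum_congr rfl fun s _ => ?_
  rw [sum_dotProduct']
  rw [Finset.sum_eq_single s]
  · rw [smul_dotProduct, dotProduct_smul, dotProduct_smul,
      horth, if_pos rfl]
    simp; ring
  · intro t _ hts
    rw [smul_dotProduct, dotProduct_smul, dotProduct_smul,
      horth, if_neg (fun h => hts (hτ h))]
    simp
  · simp

private lemma sum_swap' {n : ℕ} {ι : Type*} [Fintype ι] (v : ℕ → H) (a : ι → ℝ)
    (x : ι → Fin n → ℝ) :
    ∑ i, a i • (∑ j : Fin n, x i j • v j.1) = ∑ j : Fin n, (∑ i, a i • x i) j • v j.1 := by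
  simp_rw [Finset.smul_sum, smul_smul, Finset.sum_apply, Pi.smul_apply, smul_eq_mul,
    Finset.sum_smul]
  exact Finset.sum_comm

private lemma coe_sum_smul {n : ℕ} {ι : Type*} [Fintype ι] (c : ι → ℝ)
    (w : ι → EuclideanSpace ℝ (Fin n)) :
    (⇑(∑ s, c s • w s) : Fin n → ℝ) = ∑ s, c s • ⇑(w s) := by
  have h := map_sum (WithLp.linearEquiv 2 ℝ (Fin n → ℝ)) (fun s => c s • w s) Finset.univ
  simp only [_root_.map_smul] at h
  exact h

/-- Any family spanning a negative definite subspace for the form has at most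
`dim ker (J + 1)` members. -/
private lemma negfam_card_le (J : H →L[ℝ] H) (hJ2 : ∀ x, J (J x) = x)
    [FiniteDimensional ℝ (LinearMap.ker ((J : H →ₗ[ℝ] H) + LinearMap.id))]
    {ι : Type*} [Fintype ι] (u : ι → H)
    (hneg : ∀ a : ι → ℝ, a ≠ 0 → (inner ℝ (∑ i, a i • u i) (J (∑ i, a i • u i)) : ℝ) < 0) :
    Fintype.card ι ≤ Module.finrank ℝ (LinearMap.ker ((J : H →ₗ[ℝ] H) + LinearMap.id)) := by
  set K := LinearMap.ker ((J : H →ₗ[ℝ] H) + LinearMap.id) with hK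
  have hmem : ∀ i, u i - J (u i) ∈ K := by
    intro i
    rw [hK, LinearMap.mem_ker]
    simp only [LinearMap.add_apply, LinearMap.id_apply, ContinuousLinearMap.coe_coe,
      map_sub, hJ2]
    abel
  set w : ι → K := fun i => ⟨u i - J (u i), hmem i⟩ with hw
  have hind : LinearIndependent ℝ w := by
    rw [Fintype.linearIndependent_iff]
    intro g hg
    by_contra hcon
    push_neg at hcon
    have hg0 : g ≠ 0 := by
      obtain ⟨i, hi⟩ := hcon
      intro h; exact hi (by rw [h]; rfl)
    have hgH : (∑ i, g i • u i) - J (∑ i, g i • u i) = 0 := by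
      have := congrArg (Subtype.val) hg
      push_cast at this
      simpa [hw, Finset.sum_sub_distrib, smul_sub, map_sum, _root_.map_smul] using this
    have hfix : J (∑ i, g i • u i) = ∑ i, g i • u i := (sub_eq_zero.mp hgH).symm
    have h1 := hneg g hg0
    rw [hfix] at h1
    exact absurd h1 (not_lt.mpr real_inner_self_nonneg)
  exact hind.fintype_card_le_finrank

/-- Upper bound: any negative family built from the first `n` vectors has at most
`negEigCount (gram J v n)` members. -/
private lemma upper [CompleteSpace H] (J : H →L[ℝ] H) (hJsa : IsSelfAdjoint J) (v : ℕ → H)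
    {n : ℕ} {ι : Type*} [Fintype ι] (x : ι → Fin n → ℝ)
    (hneg : ∀ a : ι → ℝ, a ≠ 0 →
      (inner ℝ (∑ i, a i • (∑ j : Fin n, x i j • v j.1))
        (J (∑ i, a i • (∑ j : Fin n, x i j • v j.1))) : ℝ) < 0) :
    Fintype.card ι ≤ negEigCount (gram J v n) := by
  classical
  have hA := gram_isHermitian J hJsa v n
  rw [negEigCount, dif_pos hA, Nat.card_eq_fintype_card]
  let L : (ι → ℝ) →ₗ[ℝ] ({i // hA.eigenvalues i < 0} → ℝ) :=
    { toFun := fun a s => (∑ i, a i • x i) ⬝ᵥ ⇑(hA.eigenvectorBasis s.1)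
      map_add' := by
        intro a b
        funext s
        simp [add_smul, Finset.sum_add_distrib, add_dotProduct]
      map_smul' := by
        intro c a
        funext s
        have hcs : (∑ i, (c * a i) • x i) = c • (∑ i, a i • x i) := by
          rw [Finset.smul_sum]
          simp [smul_smul]
        simp only [RingHom.id_apply, Pi.smul_apply, smul_eq_mul]
        rw [hcs, smul_dotProduct, smul_eq_mul] }
  have hinj : Function.Injective L := by
    rw [injective_iff_map_eq_zero]
    intro a ha
    by_contra ha0
    set y : Fin n → ℝ := ∑ i, a i • x i with hy
    have hq : y ⬝ᵥ (gram J v n *ᵥ y) < 0 := by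
      rw [← pairing, ← sum_swap']
      exact hneg a ha0
    set c : Fin n → ℝ := fun t => ⇑(hA.eigenvectorBasis t) ⬝ᵥ y with hc
    have hrepr : y = ∑ t, c t • ⇑(hA.eigenvectorBasis t) := by
      have h := hA.eigenvectorBasis.sum_repr' ((WithLp.equiv 2 (Fin n → ℝ)).symm y)
      have h2 := congrArg (⇑(WithLp.equiv 2 (Fin n → ℝ))) h
      simp only [WithLp.equiv_apply] at h2
      rw [coe_sum_smul] at h2
      have h3 : ∀ t, (inner ℝ (hA.eigenvectorBasis t) ((WithLp.equiv 2 (Fin n → ℝ)).symm y) : ℝ)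
          = c t := by
        intro t
        rw [EuclideanSpace.inner_eq_star_dotProduct]
        simp [hc, dotProduct_comm]
      simp only [h3] at h2
      exact h2.symm
    have h2 : y ⬝ᵥ (gram J v n *ᵥ y) = ∑ t, hA.eigenvalues t * c t ^ 2 := by
      conv_lhs => rw [hrepr]
      exact quad_eigen hA id Function.injective_id c
    have h3 : (0:ℝ) ≤ ∑ t, hA.eigenvalues t * c t ^ 2 := by
      refine Finset.sum_nonneg fun t _ => ?_
      by_cases ht : hA.eigenvalues t < 0
      · have hct : c t = 0 := by
          have h0 := congrFun ha ⟨t, ht⟩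
          simp only [Pi.zero_apply] at h0
          calc c t = ⇑(hA.eigenvectorBasis t) ⬝ᵥ y := rfl
            _ = y ⬝ᵥ ⇑(hA.eigenvectorBasis t) := dotProduct_comm _ _
            _ = 0 := h0
        rw [hct]
        simp
      · push_neg at ht
        positivity
    linarith [h2 ▸ h3]
  calc Fintype.card ι = Module.finrank ℝ (ι → ℝ) :=
        (Module.finrank_fintype_fun_eq_card ℝ).symm
    _ ≤ Module.finrank ℝ ({i // hA.eigenvalues i < 0} → ℝ) :=
        LinearMap.finrank_le_finrank_of_injective hinj
    _ = Fintype.card {i // hA.eigenvalues i < 0} := Module.finrank_fintype_fun_eq_card ℝ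

/-- Lower construction: a negative family of exactly `negEigCount (gram J v n)` members
built from the first `n` vectors. -/
private lemma lower [CompleteSpace H] (J : H →L[ℝ] H) (hJsa : IsSelfAdjoint J) (v : ℕ → H)
    (n : ℕ) :
    ∃ (σ : Type) (_ : Fintype σ) (x : σ → Fin n → ℝ),
      Fintype.card σ = negEigCount (gram J v n) ∧
      ∀ a : σ → ℝ, a ≠ 0 →
        (inner ℝ (∑ s, a s • (∑ j : Fin n, x s j • v j.1))
          (J (∑ s, a s • (∑ j : Fin n, x s j • v j.1))) : ℝ) < 0 := by
  classical
  have hA := gram_isHermitian J hJsa v n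
  refine ⟨{i : Fin n // hA.eigenvalues i < 0}, inferInstance,
    fun s => ⇑(hA.eigenvectorBasis s.1), ?_, ?_⟩
  · rw [negEigCount, dif_pos hA, Nat.card_eq_fintype_card]
  · intro a ha
    rw [sum_swap', pairing]
    have hq := quad_eigen hA (Subtype.val : {i : Fin n // hA.eigenvalues i < 0} → Fin n)
      Subtype.coe_injective a
    rw [hq]
    obtain ⟨s₀, hs₀⟩ := Function.ne_iff.mp ha
    have hlt : ∑ s, hA.eigenvalues s.1 * a s ^ 2 < ∑ _s : {i : Fin n // hA.eigenvalues i < 0},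
        (0:ℝ) := by
      refine Finset.sum_lt_sum (fun s _ => ?_) ⟨s₀, Finset.mem_univ _, ?_⟩
      · exact mul_nonpos_of_nonpos_of_nonneg (le_of_lt s.2) (sq_nonneg _)
      · have hpos : 0 < a s₀ ^ 2 :=
          lt_of_le_of_ne (sq_nonneg _) (Ne.symm (pow_ne_zero 2 hs₀))
        exact mul_neg_of_neg_of_pos s₀.2 hpos
    simpa using hlt

private lemma gram_mono [CompleteSpace H] (J : H →L[ℝ] H) (hJsa : IsSelfAdjoint J)
    (v : ℕ → H) {n n' : ℕ} (h : n ≤ n') :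
    negEigCount (gram J v n) ≤ negEigCount (gram J v n') := by
  classical
  obtain ⟨σ, _, x, hcard, hneg⟩ := lower J hJsa v n
  set f : σ → ℕ → H := fun s j => (if hj : j < n then x s ⟨j, hj⟩ else 0) • v j with hf
  set x' : σ → Fin n' → ℝ := fun s j => if hj : (j : ℕ) < n then x s ⟨j.1, hj⟩ else 0 with hx'
  have key : ∀ s, ∑ j : Fin n', x' s j • v j.1 = ∑ j : Fin n, x s j • v j.1 := by
    intro s
    have hL : ∑ j : Fin n', x' s j • v j.1 = ∑ j ∈ Finset.range n', f s j := by
      rw [← Fin.sum_univ_eq_sum_range]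
    have hR : ∑ j : Fin n, x s j • v j.1 = ∑ j ∈ Finset.range n, f s j := by
      rw [← Fin.sum_univ_eq_sum_range]
      refine Finset.sum_congr rfl fun j _ => ?_
      simp [hf, j.isLt]
    rw [hL, hR]
    refine (Finset.sum_subset (Finset.range_subset_range.mpr h) fun j _ hj => ?_).symm
    have : ¬ j < n := by simpa using hj
    simp [hf, this]
  rw [← hcard]
  refine upper J hJsa v x' ?_
  intro a ha
  have := hneg a ha
  simp only [key] at *
  exact this

end AuxPontryagin

/-- Corollary 3.4: for a sequence of vectors in a Pontryagin space of negative index `k`,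
the number of negative eigenvalues of the `n × n` Gram matrices stabilizes for large `n`. -/
theorem pontryagin_gram_stabilizes {H : Type*} [NormedAddCommGroup H] [InnerProductSpace ℝ H]
    [CompleteSpace H] [TopologicalSpace.SeparableSpace H]
    (J : H →L[ℝ] H) (hJsa : IsSelfAdjoint J) (hJ2 : ∀ x, J (J x) = x) (k : ℕ)
    [FiniteDimensional ℝ (LinearMap.ker ((J : H →ₗ[ℝ] H) + LinearMap.id))]
    (hdim : Module.finrank ℝ (LinearMap.ker ((J : H →ₗ[ℝ] H) + LinearMap.id)) = k)
    (v : ℕ → H) :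
    ∃ N : ℕ, ∀ n : ℕ, N ≤ n →
      negEigCount (Matrix.of fun i j : Fin n => (inner ℝ (v i.1) (J (v j.1)) : ℝ)) =
      negEigCount (Matrix.of fun i j : Fin N => (inner ℝ (v i.1) (J (v j.1)) : ℝ)) := by
  classical
  set c : ℕ → ℕ := fun n => negEigCount (gram J v n) with hc
  have hbound : ∀ n, c n ≤ k := by
    intro n
    obtain ⟨σ, _, x, hcard, hneg⟩ := lower J hJsa v n
    have := negfam_card_le J hJ2 (fun s => ∑ j : Fin n, x s j • v j.1) hneg
    rw [hcard, hdim] at this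
    exact this
  have hmono : ∀ ⦃m n : ℕ⦄, m ≤ n → c m ≤ c n := fun m n h => gram_mono J hJsa v h
  have hne : (Set.range c).Nonempty := Set.range_nonempty c
  have hbdd : BddAbove (Set.range c) := ⟨k, by rintro _ ⟨n, rfl⟩; exact hbound n⟩
  obtain ⟨N, hN⟩ := Nat.sSup_mem hne hbdd
  refine ⟨N, fun n hn => ?_⟩
  show c n = c N
  refine le_antisymm ?_ (hmono hn)
  rw [hN]
  exact le_csSup hbdd ⟨n, rfl⟩
end

section
/- Let (a_ij)_{i,j=1}^∞ be an infinite real symmetric matrix such that for every n ≥ 1 the leading principal n×n submatrix (a_ij)_{i,j=1}^{n} has at most k negative eigenvalues, counted with multiplicity, where k is a non-negative integer. Then there exist sequences of vectors (u_j)_{j=1}^∞ in the real Hilbert space ℓ²(ℕ) and (w_j)_{j=1}^∞ in ℝ^k such that a_ij = ⟨u_i, u_j⟩_{ℓ²} − ⟨w_i, w_j⟩_{ℝ^k} for all i, j ≥ 1. -/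
section InfiniteGramAux

open Submodule Finset

lemma euclid_inner_eq {n : ℕ} (x y : EuclideanSpace ℝ (Fin n)) :
    (inner ℝ x y : ℝ) = dotProduct ⇑x ⇑y := by
  simp [PiLp.inner_apply, dotProduct, RCLike.inner_apply, mul_comm]

lemma neg_index_le {n : ℕ} (A : Matrix (Fin n) (Fin n) ℝ) (hA : A.IsHermitian)
    {d : ℕ} (F : Fin d → EuclideanSpace ℝ (Fin n)) (hF : LinearIndependent ℝ F)
    (hneg : ∀ x ∈ span ℝ (Set.range F), x ≠ 0 → dotProduct ⇑x (A.mulVec ⇑x) < 0) :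
    d ≤ Nat.card {i // hA.eigenvalues i < 0} := by
  classical
  set v := hA.eigenvectorBasis with hv
  set s : Finset (Fin n) := Finset.univ.filter (fun i => 0 ≤ hA.eigenvalues i) with hs
  set E : Submodule ℝ (EuclideanSpace ℝ (Fin n)) := span ℝ (v '' ↑s) with hE
  have horth : ∀ x ∈ E, ∀ i ∉ s, (inner ℝ (v i) x : ℝ) = 0 := by
    intro x hx i hi
    induction hx using Submodule.span_induction with
    | mem y hy =>
      obtain ⟨j, hj, rfl⟩ := hy
      have hij : i ≠ j := by rintro rfl; exact hi hj
      exact v.orthonormal.2 hij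
    | zero => simp
    | add y z hy hz hy' hz' => rw [inner_add_right, hy', hz', add_zero]
    | smul c y hy hy' => rw [inner_smul_right, hy', mul_zero]
  have hmv : ∀ j, A.mulVec ⇑(v j) = hA.eigenvalues j • ⇑(v j) := hA.mulVec_eigenvectorBasis
  have hq : ∀ x ∈ E, 0 ≤ dotProduct ⇑x (A.mulVec ⇑x) := by
    intro x hx
    have hxsum : ∑ i, v.repr x i • v i = x := v.sum_repr x
    set y : EuclideanSpace ℝ (Fin n) := (WithLp.equiv 2 (Fin n → ℝ)).symm (A.mulVec ⇑x) with hy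
    have hAx : y = ∑ i, v.repr x i • (hA.eigenvalues i • v i) := by
      apply (WithLp.equiv 2 (Fin n → ℝ)).injective
      show A.mulVec ⇑x = _
      have h1 : (⇑x : Fin n → ℝ) = ∑ i, v.repr x i • ⇑(v i) := by
        conv_lhs => rw [← hxsum]
        rw [WithLp.ofLp_sum]
        simp only [WithLp.ofLp_smul]
      have h2 := map_sum (Matrix.mulVecLin A) (fun i => v.repr x i • ⇑(v i)) Finset.univ
      simp only [LinearMap.map_smul, Matrix.mulVecLin_apply] at h2
      rw [h1, h2]
      rw [WithLp.equiv_apply, WithLp.ofLp_sum]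
      refine Finset.sum_congr rfl fun i _ => ?_
      rw [hmv i]
      rfl
    have hinner : dotProduct ⇑x (A.mulVec ⇑x) = (inner ℝ x y : ℝ) := by
      rw [euclid_inner_eq]; rfl
    rw [hinner, hAx, inner_sum]
    refine Finset.sum_nonneg fun i _ => ?_
    rw [real_inner_smul_right, real_inner_smul_right]
    have hcx : (inner ℝ x (v i) : ℝ) = v.repr x i := by
      rw [real_inner_comm]; exact (v.repr_apply_apply x i).symm
    rw [hcx]
    by_cases hci : v.repr x i = 0
    · simp [hci]
    · have his : i ∈ s := by
        by_contra hns
        exact hci ((v.repr_apply_apply x i).trans (horth x hx i hns))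
      have hlam : 0 ≤ hA.eigenvalues i := by simpa [hs] using his
      have : v.repr x i * (hA.eigenvalues i * v.repr x i)
          = hA.eigenvalues i * (v.repr x i * v.repr x i) := by ring
      rw [this]
      exact mul_nonneg hlam (mul_self_nonneg _)
  -- trivial intersection
  have hdisj : E ⊓ span ℝ (Set.range F) = ⊥ := by
    rw [Submodule.eq_bot_iff]
    intro x ⟨hxE, hxF⟩
    by_contra hx0
    exact absurd (hq x hxE) (not_le.mpr (hneg x hxF hx0))
  -- dimension count
  have hEcard : Module.finrank ℝ E = s.card := by
    rw [hE, Set.image_eq_range]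
    exact (finrank_span_eq_card (v.orthonormal.linearIndependent.comp Subtype.val
      Subtype.val_injective)).trans (Fintype.card_coe s)
  have hFcard : Module.finrank ℝ (span ℝ (Set.range F)) = d := by
    rw [finrank_span_eq_card hF, Fintype.card_fin]
  have hsum := Submodule.finrank_sup_add_finrank_inf_eq E (span ℝ (Set.range F))
  rw [hdisj, hEcard, hFcard] at hsum
  have hle : Module.finrank ℝ ↥(E ⊔ span ℝ (Set.range F)) ≤ n := by
    have := Submodule.finrank_le (E ⊔ span ℝ (Set.range F))
    simpa [finrank_euclideanSpace_fin] using this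
  have hcardn : s.card + (Finset.univ.filter (fun i => hA.eigenvalues i < 0)).card = n := by
    have := Finset.card_filter_add_card_filter_not
      (s := Finset.univ) (p := fun i => 0 ≤ hA.eigenvalues i)
    rw [show (Finset.univ.filter (fun i => ¬ 0 ≤ hA.eigenvalues i))
        = Finset.univ.filter (fun i => hA.eigenvalues i < 0) by simp [not_le]] at this
    simpa [hs] using this
  have hnc : Nat.card {i // hA.eigenvalues i < 0}
      = (Finset.univ.filter (fun i => hA.eigenvalues i < 0)).card := by
    rw [Nat.card_eq_fintype_card]
    exact Fintype.card_subtype _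
  rw [hnc]
  rw [finrank_bot ℝ (EuclideanSpace ℝ (Fin n)), add_zero] at hsum
  omega

lemma linfun_zero {r c0 : ℝ} (h : ∀ c : ℝ, 0 ≤ 2*c*r + c0) : r = 0 := by
  by_contra hr
  have h1 := h (-(c0+1)/(2*r))
  rw [show 2 * (-(c0+1)/(2*r)) * r = -(c0+1) by field_simp] at h1
  linarith

lemma exists_rep {H : Type*} [NormedAddCommGroup H] [InnerProductSpace ℝ H] {N : ℕ}
    (vv : Fin N → H) (b : Fin N → ℝ) (gnn : ℝ)
    (hPSD : ∀ (lam : Fin N → ℝ) (t : ℝ),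
      0 ≤ (inner ℝ (∑ i, lam i • vv i) (∑ i, lam i • vv i) : ℝ)
        + 2*t*(∑ i, lam i * b i) + t^2*gnn) :
    ∃ s : H, s ∈ span ℝ (Set.range vv) ∧ (∀ i, (inner ℝ s (vv i) : ℝ) = b i)
      ∧ (inner ℝ s s : ℝ) ≤ gnn := by
  classical
  set G : Matrix (Fin N) (Fin N) ℝ := Matrix.of (fun i j => (inner ℝ (vv i) (vv j) : ℝ)) with hG
  set M : EuclideanSpace ℝ (Fin N) →ₗ[ℝ] EuclideanSpace ℝ (Fin N) := Matrix.toEuclideanLin G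
    with hM
  set T : (Fin N → ℝ) → H := fun x => ∑ j, x j • vv j with hT
  have hMapp : ∀ (x : EuclideanSpace ℝ (Fin N)) (i : Fin N),
      M x i = (inner ℝ (vv i) (T (⇑x)) : ℝ) := by
    intro x i
    have h1 : M x i = ∑ j, G i j * x j := by
      rw [hM, Matrix.toEuclideanLin_apply]
      rfl
    rw [h1, hT]
    simp only [inner_sum, real_inner_smul_right]
    exact Finset.sum_congr rfl fun j _ => by rw [hG]; simp [mul_comm]
  have hinnerM : ∀ (x y : EuclideanSpace ℝ (Fin N)),
      (inner ℝ x (M y) : ℝ) = (inner ℝ (T ⇑x) (T ⇑y) : ℝ) := by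
    intro x y
    have hx1 : (inner ℝ x (M y) : ℝ) = ∑ i, x i * (inner ℝ (vv i) (T ⇑y) : ℝ) := by
      rw [show (inner ℝ x (M y) : ℝ) = ∑ i, x i * M y i by
        simp [PiLp.inner_apply, RCLike.inner_apply, mul_comm]]
      exact Finset.sum_congr rfl fun i _ => by rw [hMapp y i]
    have hx2 : (inner ℝ (T ⇑x) (T ⇑y) : ℝ) = ∑ i, x i * (inner ℝ (vv i) (T ⇑y) : ℝ) := by
      rw [show T ⇑x = ∑ j, x j • vv j from rfl, sum_inner]
      exact Finset.sum_congr rfl fun i _ => by rw [real_inner_smul_left]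
    rw [hx1, hx2]
  have hMsym : ∀ (x y : EuclideanSpace ℝ (Fin N)), (inner ℝ (M x) y : ℝ) = (inner ℝ x (M y) : ℝ) := by
    intro x y
    rw [hinnerM x y, real_inner_comm y (M x), hinnerM y x, real_inner_comm]
  have hkerT : ∀ x : EuclideanSpace ℝ (Fin N), M x = 0 → T ⇑x = 0 := by
    intro x hx
    exact inner_self_eq_zero.mp (by rw [← hinnerM x x, hx, inner_zero_right])
  have hle : LinearMap.range M ≤ (LinearMap.ker M)ᗮ := by
    rintro x ⟨lam, rfl⟩
    intro y hy
    rw [real_inner_comm, hMsym, LinearMap.mem_ker.mp hy, inner_zero_right]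
  have heq : LinearMap.range M = (LinearMap.ker M)ᗮ := by
    apply Submodule.eq_of_le_of_finrank_eq hle
    have h1 := LinearMap.finrank_range_add_finrank_ker M
    have h2 := Submodule.finrank_add_finrank_orthogonal (K := LinearMap.ker M)
    simp only [finrank_euclideanSpace_fin] at h1 h2
    omega
  set bE : EuclideanSpace ℝ (Fin N) := (WithLp.equiv 2 (Fin N → ℝ)).symm b with hbE
  have hbmem : bE ∈ (LinearMap.ker M)ᗮ := by
    intro y hy
    have hTy : T ⇑y = 0 := hkerT y (LinearMap.mem_ker.mp hy)
    have hr : ∀ c : ℝ, 0 ≤ 2*c*(∑ i, y i * b i) + gnn := by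
      intro c
      have h0 := hPSD (fun i => c * y i) 1
      beta_reduce at h0
      have e2 : (∑ i : Fin N, (c * y i) • vv i) = c • T ⇑y := by
        rw [hT, Finset.smul_sum]
        exact Finset.sum_congr rfl fun i _ => (smul_smul c (y i) (vv i)).symm
      rw [e2, hTy, smul_zero, inner_zero_left] at h0
      have e3 : (∑ i : Fin N, (c * y i) * b i) = c * ∑ i, y i * b i := by
        rw [Finset.mul_sum]; exact Finset.sum_congr rfl fun i _ => by ring
      rw [e3] at h0
      calc (0:ℝ) ≤ 0 + 2*1*(c * ∑ i, y i * b i) + 1^2*gnn := h0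
        _ = 2*c*(∑ i, y i * b i) + gnn := by ring
    have hr0 := linfun_zero hr
    rw [real_inner_comm]
    rw [show (inner ℝ bE y : ℝ) = ∑ i, y i * b i by
      simp only [PiLp.inner_apply, RCLike.inner_apply]
      exact Finset.sum_congr rfl fun i _ => by rw [hbE]; simp [mul_comm]]
    exact hr0
  obtain ⟨lam, hlam⟩ : bE ∈ LinearMap.range M := heq ▸ hbmem
  refine ⟨T ⇑lam, ?_, ?_, ?_⟩
  · exact Submodule.sum_mem _ fun j _ =>
      Submodule.smul_mem _ _ (Submodule.subset_span ⟨j, rfl⟩)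
  · intro i
    rw [real_inner_comm, ← hMapp lam i, hlam]
    rw [hbE]
    rfl
  · set lam' : Fin N → ℝ := ⇑lam with hlam'
    have h0 := hPSD lam' (-1)
    beta_reduce at h0
    have e4 : (∑ i : Fin N, lam' i • vv i) = T lam' := rfl
    have e5 : (∑ i : Fin N, lam' i * b i) = (inner ℝ (T lam') (T lam') : ℝ) := by
      rw [← hinnerM lam lam, hlam]
      rw [show (inner ℝ lam bE : ℝ) = ∑ i, lam' i * b i by
        simp only [PiLp.inner_apply, RCLike.inner_apply]
        exact Finset.sum_congr rfl fun i _ => by rw [hbE, hlam']; simp [mul_comm]]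
    rw [e4, e5] at h0
    linarith

notation "Hℓ" => lp (fun _ : ℕ => ℝ) 2

noncomputable def epsV (n : ℕ) : Hℓ := lp.single 2 n (1:ℝ)

noncomputable def SpanS (m : ℕ) : Submodule ℝ Hℓ :=
  span ℝ (Set.range (fun t : Fin m => epsV t.1))

lemma SpanS_mono {m m' : ℕ} (h : m ≤ m') : SpanS m ≤ SpanS m' := by
  apply span_mono
  rintro x ⟨t, rfl⟩
  exact ⟨⟨t.1, lt_of_lt_of_le t.2 h⟩, rfl⟩

lemma inner_epsV_eq_zero {n : ℕ} {x : Hℓ} (hx : x ∈ SpanS n) : (inner ℝ (epsV n) x : ℝ) = 0 := by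
  induction hx using Submodule.span_induction with
  | mem y hy =>
    obtain ⟨t, rfl⟩ := hy
    simp only [epsV]
    rw [lp.inner_single_left]
    have h0 : (lp.single 2 (t:ℕ) (1:ℝ) : lp (fun _ : ℕ => ℝ) 2) n = 0 :=
      lp.single_apply_ne 2 t.1 _ (Nat.ne_of_gt t.2)
    rw [h0]
    simp
  | zero => simp
  | add y z hy hz hy' hz' => rw [inner_add_right, hy', hz', add_zero]
  | smul c y hy hy' => rw [inner_smul_right, hy', mul_zero]

lemma inner_epsV_self (n : ℕ) : (inner ℝ (epsV n) (epsV n) : ℝ) = 1 := by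
  simp only [epsV]
  rw [lp.inner_single_left]
  have h0 : (lp.single 2 n (1:ℝ) : lp (fun _ : ℕ => ℝ) 2) n = 1 := lp.single_apply_self 2 n 1
  rw [h0]
  simp

lemma gram_step (g : ℕ → ℕ → ℝ) (hgsym : ∀ i j, g i j = g j i)
    (hPSD : ∀ (n : ℕ) (x : Fin n → ℝ), 0 ≤ ∑ i, ∑ j, x i * x j * g i.1 j.1)
    (n : ℕ) (f : Fin n → Hℓ)
    (hf1 : ∀ i j : Fin n, (inner ℝ (f i) (f j) : ℝ) = g i.1 j.1)
    (hf2 : ∀ i : Fin n, f i ∈ SpanS (i.1+1)) :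
    ∃ v : Hℓ, (∀ i : Fin n, (inner ℝ (f i) v : ℝ) = g i.1 n)
      ∧ (inner ℝ v v : ℝ) = g n n ∧ v ∈ SpanS (n+1) := by
  have hfS : ∀ i : Fin n, f i ∈ SpanS n := fun i => SpanS_mono i.2 (hf2 i)
  have hps : ∀ (lam : Fin n → ℝ) (t : ℝ),
      0 ≤ (inner ℝ (∑ i, lam i • f i) (∑ i, lam i • f i) : ℝ)
        + 2*t*(∑ i, lam i * (g n i.1)) + t^2*(g n n) := by
    intro lam t
    have e1 : (inner ℝ (∑ i, lam i • f i) (∑ i, lam i • f i) : ℝ)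
        = ∑ i, ∑ j, lam i * lam j * g i.1 j.1 := by
      rw [sum_inner]
      refine Finset.sum_congr rfl fun i _ => ?_
      rw [real_inner_smul_left, inner_sum, Finset.mul_sum]
      refine Finset.sum_congr rfl fun j _ => ?_
      rw [real_inner_smul_right, hf1 i j]
      ring
    have hq := hPSD (n+1) (Fin.snoc lam t)
    simp only [Fin.sum_univ_castSucc, Fin.snoc_castSucc, Fin.snoc_last,
      Fin.coe_castSucc, Fin.val_last] at hq
    rw [Finset.sum_add_distrib] at hq
    have e2 : ∑ i : Fin n, lam i * t * g i.1 n = t * ∑ i : Fin n, lam i * g n i.1 := by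
      rw [Finset.mul_sum]
      exact Finset.sum_congr rfl fun i _ => by rw [hgsym i.1 n]; ring
    have e3 : ∑ j : Fin n, t * lam j * g n j.1 = t * ∑ i : Fin n, lam i * g n i.1 := by
      rw [Finset.mul_sum]
      exact Finset.sum_congr rfl fun i _ => by ring
    rw [e2, e3] at hq
    rw [e1]
    have : t^2 = t*t := sq t
    linarith
  obtain ⟨s, hsSpan, hsInner, hsNorm⟩ := exists_rep f (fun i => g n i.1) (g n n) hps
  set c : ℝ := Real.sqrt (g n n - (inner ℝ s s : ℝ)) with hc
  have hcc : c * c = g n n - (inner ℝ s s : ℝ) := Real.mul_self_sqrt (by linarith)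
  have hsS : s ∈ SpanS n := by
    refine Submodule.span_le.mpr ?_ hsSpan
    rintro x ⟨i, rfl⟩
    exact hfS i
  have hes : (inner ℝ (epsV n) s : ℝ) = 0 := inner_epsV_eq_zero hsS
  have hef : ∀ i : Fin n, (inner ℝ (epsV n) (f i) : ℝ) = 0 :=
    fun i => inner_epsV_eq_zero (hfS i)
  refine ⟨s + c • epsV n, ?_, ?_, ?_⟩
  · intro i
    rw [inner_add_right, real_inner_smul_right, real_inner_comm s (f i), hsInner i,
      real_inner_comm (epsV n) (f i), hef i, mul_zero, add_zero, hgsym n i.1]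
  · rw [real_inner_add_add_self, real_inner_smul_right, real_inner_smul_left,
      real_inner_smul_right, real_inner_comm (epsV n) s, hes, inner_epsV_self]
    ring_nf
    linarith [hcc]
  · refine Submodule.add_mem _ (SpanS_mono (Nat.le_succ n) hsS) ?_
    exact Submodule.smul_mem _ _ (Submodule.subset_span ⟨⟨n, Nat.lt_succ_self n⟩, rfl⟩)

lemma psd_kernel_gram (g : ℕ → ℕ → ℝ) (hgsym : ∀ i j, g i j = g j i)
    (hPSD : ∀ (n : ℕ) (x : Fin n → ℝ), 0 ≤ ∑ i, ∑ j, x i * x j * g i.1 j.1) :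
    ∃ u : ℕ → Hℓ, ∀ i j : ℕ, (inner ℝ (u i) (u j) : ℝ) = g i j := by
  classical
  set Ok : ∀ n : ℕ, (Fin n → Hℓ) → Prop := fun n f =>
    (∀ i j : Fin n, (inner ℝ (f i) (f j) : ℝ) = g i.1 j.1) ∧ ∀ i : Fin n, f i ∈ SpanS (i.1+1)
    with hOk
  have step : ∀ n (f : Fin n → Hℓ), Ok n f → ∃ v : Hℓ, Ok (n+1) (Fin.snoc f v) := by
    intro n f hf
    obtain ⟨v, hv1, hv2, hv3⟩ := gram_step g hgsym hPSD n f hf.1 hf.2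
    constructor
    case w => exact v
    rw [hOk]
    constructor
    · intro i j
      induction i using Fin.lastCases with
      | last =>
        induction j using Fin.lastCases with
        | last => simpa [Fin.snoc_last] using hv2
        | cast j =>
          rw [Fin.snoc_last, Fin.snoc_castSucc, Fin.coe_castSucc, Fin.val_last,
            real_inner_comm, hv1 j, hgsym]
      | cast i =>
        induction j using Fin.lastCases with
        | last => rw [Fin.snoc_last, Fin.snoc_castSucc, Fin.coe_castSucc, Fin.val_last]
                  exact hv1 i
        | cast j => rw [Fin.snoc_castSucc, Fin.snoc_castSucc, Fin.coe_castSucc,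
                      Fin.coe_castSucc]
                    exact hf.1 i j
    · intro i
      induction i using Fin.lastCases with
      | last => simpa [Fin.snoc_last, Fin.val_last] using hv3
      | cast i =>
        rw [Fin.snoc_castSucc, Fin.coe_castSucc]
        exact hf.2 i
  let U : ∀ n : ℕ, {f : Fin n → Hℓ // Ok n f} := fun n => Nat.rec
    ⟨fun i => i.elim0, by rw [hOk]; exact ⟨fun i => i.elim0, fun i => i.elim0⟩⟩
    (fun n p => ⟨Fin.snoc p.1 (Classical.choose (step n p.1 p.2)),
      Classical.choose_spec (step n p.1 p.2)⟩) n
  have hUsucc : ∀ n, (U (n+1)).1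
      = Fin.snoc (U n).1 (Classical.choose (step n (U n).1 (U n).2)) := fun n => rfl
  refine ⟨fun n => (U (n+1)).1 (Fin.last n), ?_⟩
  have hcons : ∀ (n : ℕ) (i : Fin n), (U n).1 i = (U (i.1+1)).1 (Fin.last i.1) := by
    intro n
    induction n with
    | zero => exact fun i => i.elim0
    | succ n ih =>
      intro i
      induction i using Fin.lastCases with
      | last => rfl
      | cast i =>
        rw [hUsucc n, Fin.snoc_castSucc]
        simpa [Fin.coe_castSucc] using ih i
  intro i j
  have hmi : i < max i j + 1 := Nat.lt_succ_of_le (le_max_left i j)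
  have hmj : j < max i j + 1 := Nat.lt_succ_of_le (le_max_right i j)
  have hg := (U (max i j + 1)).2.1 ⟨i, hmi⟩ ⟨j, hmj⟩
  rw [hcons (max i j + 1) ⟨i, hmi⟩, hcons (max i j + 1) ⟨j, hmj⟩] at hg
  exact hg

noncomputable def Bform (a : ℕ → ℕ → ℝ) : (ℕ →₀ ℝ) →ₗ[ℝ] (ℕ →₀ ℝ) →ₗ[ℝ] ℝ :=
  Finsupp.lsum ℝ (fun i => LinearMap.toSpanSingleton ℝ ((ℕ →₀ ℝ) →ₗ[ℝ] ℝ)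
    (Finsupp.lsum ℝ (fun j => LinearMap.toSpanSingleton ℝ ℝ (a i j))))

lemma Bform_single_single (a : ℕ → ℕ → ℝ) (i j : ℕ) (c d : ℝ) :
    Bform a (Finsupp.single i c) (Finsupp.single j d) = c * d * a i j := by
  rw [Bform]
  simp [Finsupp.lsum_single, LinearMap.toSpanSingleton_apply, smul_smul]
  ring

lemma Bform_symm {a : ℕ → ℕ → ℝ} (hsym : ∀ i j, a i j = a j i) (x y : ℕ →₀ ℝ) :
    Bform a x y = Bform a y x := by
  have h : Bform a = (Bform a).flip := by
    apply Finsupp.lhom_ext'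
    intro i
    apply LinearMap.ext_ring
    apply Finsupp.lhom_ext'
    intro j
    apply LinearMap.ext_ring
    simp only [LinearMap.comp_apply, LinearMap.flip_apply, Finsupp.lsingle_apply]
    rw [Bform_single_single, Bform_single_single, hsym i j]
  conv_lhs => rw [h]
  rfl

lemma Bform_sum_sum {a : ℕ → ℕ → ℝ} {x y : ℕ →₀ ℝ} {n : ℕ}
    (hx : x.support ⊆ Finset.range n) (hy : y.support ⊆ Finset.range n) :
    Bform a x y = ∑ i : Fin n, ∑ j : Fin n, x i.1 * y j.1 * a i.1 j.1 := by
  have hxe : x = ∑ i ∈ Finset.range n, Finsupp.single i (x i) := by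
    conv_lhs => rw [← Finsupp.sum_single x]
    exact Finsupp.sum_of_support_subset x hx _ (fun i _ => Finsupp.single_zero i)
  have hye : y = ∑ j ∈ Finset.range n, Finsupp.single j (y j) := by
    conv_lhs => rw [← Finsupp.sum_single y]
    exact Finsupp.sum_of_support_subset y hy _ (fun i _ => Finsupp.single_zero i)
  have step1 : Bform a x y = ∑ i ∈ Finset.range n, Bform a (Finsupp.single i (x i)) y := by
    conv_lhs => rw [hxe]
    rw [map_sum, LinearMap.sum_apply]
  rw [step1, ← Fin.sum_univ_eq_sum_range
    (fun i => Bform a (Finsupp.single i (x i)) y) n]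
  refine Finset.sum_congr rfl fun i _ => ?_
  have step2 : Bform a (Finsupp.single i.1 (x i.1)) y
      = ∑ j ∈ Finset.range n, Bform a (Finsupp.single i.1 (x i.1)) (Finsupp.single j (y j)) := by
    conv_lhs => rw [hye]
    exact map_sum _ _ _
  rw [step2, ← Fin.sum_univ_eq_sum_range
    (fun j => Bform a (Finsupp.single i.1 (x i.1)) (Finsupp.single j (y j))) n]
  exact Finset.sum_congr rfl fun j _ => Bform_single_single a i.1 j.1 _ _

lemma exists_orthonormed_neg (a : ℕ → ℕ → ℝ) (hsym : ∀ i j, a i j = a j i) {m : ℕ}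
    (f : Fin m → (ℕ →₀ ℝ)) (hf : LinearIndependent ℝ f)
    (hneg : ∀ x ∈ span ℝ (Set.range f), x ≠ 0 → Bform a x x < 0) :
    ∃ fb : Fin m → (ℕ →₀ ℝ),
      ∀ s t, Bform a (fb s) (fb t) = if s = t then -1 else 0 := by
  classical
  set W : Submodule ℝ (ℕ →₀ ℝ) := span ℝ (Set.range f) with hW
  haveI : FiniteDimensional ℝ W := FiniteDimensional.span_of_finite ℝ (Set.finite_range f)
  have hm' : Module.finrank ℝ W = m := by
    rw [hW, finrank_span_eq_card hf, Fintype.card_fin]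
  letI core : InnerProductSpace.Core ℝ W :=
    { inner := fun x y => -(Bform a x.1 y.1)
      conj_inner_symm := fun x y => by
        simp only [RCLike.star_def, starRingEnd_apply, star_trivial]
        rw [Bform_symm hsym]
      re_inner_nonneg := fun x => by
        simp only [RCLike.re_to_real]
        by_cases hx : (x : ℕ →₀ ℝ) = 0
        · simp [hx]
        · have := hneg x.1 x.2 hx
          linarith
      add_left := fun x y z => by
        simp only [Submodule.coe_add, map_add, LinearMap.add_apply]
        ring
      smul_left := fun x y c => by
        simp only [Submodule.coe_smul, map_smul, LinearMap.smul_apply, smul_eq_mul,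
          RCLike.conj_to_real]
        ring
      definite := fun x hx => by
        by_contra hx0
        have hxne : (x : ℕ →₀ ℝ) ≠ 0 := fun hh => hx0 (Subtype.ext hh)
        have h3 := hneg x.1 x.2 hxne
        have hb : -(Bform a x.1 x.1) = 0 := hx
        linarith }
  letI : NormedAddCommGroup W := core.toNormedAddCommGroup
  letI : InnerProductSpace ℝ W := InnerProductSpace.ofCore core.toCore
  set onb := (stdOrthonormalBasis ℝ W).reindex (finCongr hm') with honb
  refine ⟨fun t => (onb t).1, fun s t => ?_⟩
  show Bform a (onb s).1 (onb t).1 = _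
  have horth := onb.orthonormal
  rw [orthonormal_iff_ite] at horth
  have h1 := horth s t
  have h2 : (inner ℝ (onb s) (onb t) : ℝ) = -(Bform a (onb s).1 (onb t).1) := rfl
  rw [h2] at h1
  by_cases hst : s = t
  · simp only [hst, eq_self_iff_true, if_true] at h1 ⊢
    linarith
  · simp only [if_neg hst] at h1 ⊢
    linarith

lemma negdef_dim_le (k : ℕ) (a : ℕ → ℕ → ℝ) (hsym : ∀ i j, a i j = a j i)
    (h : ∀ n : ℕ, 1 ≤ n → negEigCount (Matrix.of fun i j : Fin n => a i.1 j.1) ≤ k)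
    {d : ℕ} (f : Fin d → (ℕ →₀ ℝ)) (hf : LinearIndependent ℝ f)
    (hneg : ∀ x ∈ span ℝ (Set.range f), x ≠ 0 → Bform a x x < 0) : d ≤ k := by
  classical
  set N : Finset ℕ := Finset.univ.biUnion (fun t : Fin d => (f t).support) with hN
  set n : ℕ := N.sup id + 1 with hn
  have hNn : ∀ i ∈ N, i < n := fun i hi => Nat.lt_succ_of_le (Finset.le_sup (f := id) hi)
  have hsupp : ∀ x ∈ span ℝ (Set.range f), x.support ⊆ Finset.range n := by
    intro x hx
    have hsub : span ℝ (Set.range f) ≤ Finsupp.supported ℝ ℝ (↑(Finset.range n) : Set ℕ) := by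
      rw [span_le]
      rintro y ⟨t, rfl⟩
      simp only [SetLike.mem_coe]
      rw [Finsupp.mem_supported]
      intro i hi
      simp only [Finset.coe_range, Set.mem_Iio]
      exact hNn i (Finset.mem_biUnion.mpr ⟨t, Finset.mem_univ t, hi⟩)
    have := hsub hx
    rw [Finsupp.mem_supported] at this
    intro i hi
    simpa using this hi
  set A : Matrix (Fin n) (Fin n) ℝ := Matrix.of (fun i j : Fin n => a i.1 j.1) with hA
  have hAh : A.IsHermitian := by
    apply Matrix.ext
    intro i j
    simp only [hA, Matrix.conjTranspose_apply, Matrix.of_apply, star_trivial]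
    exact hsym j.1 i.1
  have hcount : Nat.card {i // hAh.eigenvalues i < 0} ≤ k := by
    have hk := h n (Nat.le_add_left 1 _)
    rw [negEigCount, dif_pos hAh] at hk
    exact hk
  set Rmap : (ℕ →₀ ℝ) →ₗ[ℝ] EuclideanSpace ℝ (Fin n) :=
    (WithLp.linearEquiv 2 ℝ (Fin n → ℝ)).symm.toLinearMap.comp
      (LinearMap.pi (fun i : Fin n => Finsupp.lapply i.1)) with hR
  have hRapp : ∀ (x : ℕ →₀ ℝ) (j : Fin n), (Rmap x) j = x j.1 := fun x j => rfl
  have hdisj : Disjoint (span ℝ (Set.range f)) (LinearMap.ker Rmap) := by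
    rw [Submodule.disjoint_def]
    intro x hxs hxk
    have hx0 : Rmap x = 0 := LinearMap.mem_ker.mp hxk
    ext i
    by_cases hi : i ∈ x.support
    · have hin : i < n := by simpa using hsupp x hxs hi
      have := congrFun (congrArg (fun (z : EuclideanSpace ℝ (Fin n)) => ⇑z) hx0) ⟨i, hin⟩
      simpa [hRapp] using this
    · simpa using Finsupp.notMem_support_iff.mp hi
  have hFind : LinearIndependent ℝ (⇑Rmap ∘ f) := hf.map hdisj
  have hnegF : ∀ y ∈ span ℝ (Set.range (⇑Rmap ∘ f)), y ≠ 0 →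
      dotProduct ⇑y (A.mulVec ⇑y) < 0 := by
    intro y hy hy0
    rw [Set.range_comp, ← Submodule.map_span] at hy
    obtain ⟨x, hxs, rfl⟩ := hy
    have hx0 : x ≠ 0 := fun hh => hy0 (by rw [hh, map_zero])
    have hBx := hneg x hxs hx0
    rw [Bform_sum_sum (hsupp x hxs) (hsupp x hxs)] at hBx
    have hdot : dotProduct ⇑(Rmap x) (A.mulVec ⇑(Rmap x))
        = ∑ i : Fin n, ∑ j : Fin n, x i.1 * x j.1 * a i.1 j.1 := by
      have hRx : (⇑(Rmap x) : Fin n → ℝ) = fun j => x j.1 := rfl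
      rw [hRx]
      simp only [dotProduct, Matrix.mulVec, Matrix.of_apply, Finset.mul_sum, hA]
      exact Finset.sum_congr rfl fun i _ => Finset.sum_congr rfl fun j _ => by ring
    rw [hdot]
    exact hBx
  exact (neg_index_le A hAh (⇑Rmap ∘ f) hFind hnegF).trans hcount

-- helpers
lemma Bform_comb_left (a : ℕ → ℕ → ℝ) {κ : Type*} [Fintype κ] (c : κ → ℝ)
    (v : κ → (ℕ →₀ ℝ)) (y : ℕ →₀ ℝ) :
    Bform a (∑ t, c t • v t) y = ∑ t, c t * Bform a (v t) y := by
  rw [map_sum, LinearMap.sum_apply]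
  exact Finset.sum_congr rfl fun t _ => by
    rw [map_smul, LinearMap.smul_apply, smul_eq_mul]

lemma Bform_comb_right (a : ℕ → ℕ → ℝ) {κ : Type*} [Fintype κ] (c : κ → ℝ)
    (v : κ → (ℕ →₀ ℝ)) (x : ℕ →₀ ℝ) :
    Bform a x (∑ t, c t • v t) = ∑ t, c t * Bform a x (v t) := by
  rw [map_sum]
  exact Finset.sum_congr rfl fun t _ => by rw [map_smul, smul_eq_mul]

section helpers
variable {a : ℕ → ℕ → ℝ} {m : ℕ} {fb : Fin m → (ℕ →₀ ℝ)}
  (horm : ∀ s t, Bform a (fb s) (fb t) = if s = t then -1 else 0)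

include horm

lemma comb_fb_eval (c : Fin m → ℝ) (t : Fin m) :
    Bform a (∑ s, c s • fb s) (fb t) = -(c t) := by
  rw [Bform_comb_left]
  have : ∀ s, c s * Bform a (fb s) (fb t) = if s = t then -(c s) else 0 := by
    intro s
    rw [horm s t]
    by_cases hst : s = t <;> simp [hst]
  rw [Finset.sum_congr rfl fun s _ => this s]
  simp
lemma comb_fb_comb (c d : Fin m → ℝ) :
    Bform a (∑ s, c s • fb s) (∑ t, d t • fb t) = -(∑ t, c t * d t) := by
  rw [Bform_comb_right]
  have : ∀ t, d t * Bform a (∑ s, c s • fb s) (fb t) = -(d t * c t) := by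
    intro t
    rw [comb_fb_eval horm c t]
    ring
  rw [Finset.sum_congr rfl fun t _ => this t]
  rw [← Finset.sum_neg_distrib]
  exact Finset.sum_congr rfl fun t _ => by ring

lemma fb_indep : LinearIndependent ℝ fb := by
  rw [Fintype.linearIndependent_iff]
  intro c hc s
  have h0 := comb_fb_eval horm c s
  rw [hc] at h0
  simp only [map_zero, LinearMap.zero_apply] at h0
  linarith
end helpers

end InfiniteGramAux

open Submodule Finset in
/-- Lemma 3.5: if every leading principal submatrix of an infinite real symmetric matrix has
at most `k` negative eigenvalues, then the matrix is realized as an indefinite Gram matrix of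
a sequence of vectors in `ℓ² ⊕ ℝ^k`, i.e. `a i j = ⟨uᵢ, uⱼ⟩ - ⟨wᵢ, wⱼ⟩`. -/
theorem infinite_gram_realization (k : ℕ) (a : ℕ → ℕ → ℝ)
    (hsym : ∀ i j, a i j = a j i)
    (h : ∀ n : ℕ, 1 ≤ n → negEigCount (Matrix.of fun i j : Fin n => a i.1 j.1) ≤ k) :
    ∃ (u : ℕ → lp (fun _ : ℕ => ℝ) 2) (w : ℕ → EuclideanSpace ℝ (Fin k)),
      ∀ i j : ℕ, a i j = (inner ℝ (u i) (u j) : ℝ) - (inner ℝ (w i) (w j) : ℝ) := by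
  classical
  set D : Set ℕ := {d | ∃ f : Fin d → (ℕ →₀ ℝ), LinearIndependent ℝ f ∧
    ∀ x ∈ span ℝ (Set.range f), x ≠ 0 → Bform a x x < 0} with hD
  have hD0 : 0 ∈ D := by
    refine ⟨fun i => i.elim0, linearIndependent_empty_type, ?_⟩
    intro x hx hx0
    rw [Set.range_eq_empty, span_empty, Submodule.mem_bot] at hx
    exact absurd hx hx0
  have hDb : ∀ d ∈ D, d ≤ k := fun d ⟨f, hf, hneg⟩ => negdef_dim_le k a hsym h f hf hneg
  have hBdd : BddAbove D := ⟨k, fun d hd => hDb d hd⟩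
  set m : ℕ := sSup D with hm
  have hmD : m ∈ D := Nat.sSup_mem ⟨0, hD0⟩ hBdd
  have hmk : m ≤ k := hDb m hmD
  obtain ⟨f, hf, hneg⟩ := hmD
  obtain ⟨fb, horm⟩ := exists_orthonormed_neg a hsym f hf hneg
  set e : ℕ → (ℕ →₀ ℝ) := fun i => Finsupp.single i 1 with he
  -- maximality: B is PSD on the orthogonal complement of fb
  have hmax : ∀ x : ℕ →₀ ℝ, (∀ t : Fin m, Bform a x (fb t) = 0) → 0 ≤ Bform a x x := by
    intro x hx
    by_contra hlt
    push_neg at hlt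
    have hxB : Bform a x x < 0 := hlt
    have hxne : x ≠ 0 := by
      rintro rfl
      simp at hxB
    set F' : Fin (m+1) → (ℕ →₀ ℝ) := Fin.snoc fb x with hF'
    have hsplit : ∀ g : Fin (m+1) → ℝ, (∑ i, g i • F' i)
        = (∑ t : Fin m, g t.castSucc • fb t) + g (Fin.last m) • x := by
      intro g
      rw [Fin.sum_univ_castSucc]
      simp [hF', Fin.snoc_castSucc, Fin.snoc_last]
    have hxfb : ∀ t : Fin m, Bform a (fb t) x = 0 :=
      fun t => (Bform_symm hsym (fb t) x).trans (hx t)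
    have hFind : LinearIndependent ℝ F' := by
      rw [Fintype.linearIndependent_iff]
      intro g hg
      have hcoef : ∀ s : Fin m, g s.castSucc = 0 := by
        intro s
        have h0 : Bform a (∑ i, g i • F' i) (fb s) = 0 := by
          rw [hg]; simp
        rw [hsplit, map_add, LinearMap.add_apply, comb_fb_eval horm, map_smul,
          LinearMap.smul_apply, smul_eq_mul, hx s, mul_zero, add_zero] at h0
        linarith
      have hlast : g (Fin.last m) • x = 0 := by
        have := hsplit g
        rw [hg] at this
        rw [Finset.sum_congr rfl (fun t _ => by rw [hcoef t, zero_smul]),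
          Finset.sum_const_zero, zero_add] at this
        exact this.symm
      have hgl : g (Fin.last m) = 0 := by
        rcases smul_eq_zero.mp hlast with h1 | h1
        · exact h1
        · exact absurd h1 hxne
      intro i
      induction i using Fin.lastCases with
      | last => exact hgl
      | cast i => exact hcoef i
    have hFneg : ∀ z ∈ span ℝ (Set.range F'), z ≠ 0 → Bform a z z < 0 := by
      intro z hz hz0
      rw [mem_span_range_iff_exists_fun] at hz
      obtain ⟨c, rfl⟩ := hz
      rw [hsplit c]
      set y : ℕ →₀ ℝ := ∑ t : Fin m, c t.castSucc • fb t with hy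
      set tl : ℝ := c (Fin.last m) with htl
      have hBy : Bform a y y = -(∑ t : Fin m, c t.castSucc * c t.castSucc) :=
        comb_fb_comb horm _ _
      have hyx : Bform a y (tl • x) = 0 := by
        rw [map_smul, smul_eq_mul, hy, Bform_comb_left,
          Finset.sum_congr rfl (fun t _ => by rw [hxfb t, mul_zero]),
          Finset.sum_const_zero, mul_zero]
      have hxy : Bform a (tl • x) y = 0 := by rw [Bform_symm hsym, hyx]
      have hxx : Bform a (tl • x) (tl • x) = tl * tl * Bform a x x := by
        simp only [map_smul, LinearMap.smul_apply, smul_eq_mul]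
        ring
      have expand : Bform a (y + tl • x) (y + tl • x)
          = Bform a y y + Bform a y (tl • x) + Bform a (tl • x) y
            + Bform a (tl • x) (tl • x) := by
        simp only [map_add, LinearMap.add_apply]
        ring
      rw [expand, hBy, hyx, hxy, hxx]
      have hsq : 0 ≤ ∑ t : Fin m, c t.castSucc * c t.castSucc :=
        Finset.sum_nonneg fun t _ => mul_self_nonneg _
      by_cases hc0 : tl = 0
      · have hyne : y ≠ 0 := by
          intro hy0
          apply hz0
          rw [hsplit c, ← hy, hy0, zero_add, ← htl, hc0, zero_smul]
        have hex : ∃ t : Fin m, c t.castSucc ≠ 0 := by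
          by_contra hall
          push_neg at hall
          apply hyne
          rw [hy, Finset.sum_congr rfl (fun t _ => by rw [hall t, zero_smul]),
            Finset.sum_const_zero]
        obtain ⟨t0, ht0⟩ := hex
        have hpos : 0 < ∑ t : Fin m, c t.castSucc * c t.castSucc :=
          Finset.sum_pos' (fun t _ => mul_self_nonneg _)
            ⟨t0, Finset.mem_univ t0, mul_self_pos.mpr ht0⟩
        rw [hc0]
        nlinarith
      · have : 0 < tl * tl := mul_self_pos.mpr hc0
        nlinarith
    have hm1 : m + 1 ∈ D := ⟨F', hFind, hFneg⟩
    have := le_csSup hBdd hm1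
    omega
  -- projection
  set Pe : ℕ → (ℕ →₀ ℝ) := fun i => e i + ∑ t, (Bform a (e i) (fb t)) • fb t with hPe
  have hPperp : ∀ (i : ℕ) (t : Fin m), Bform a (Pe i) (fb t) = 0 := by
    intro i t
    show Bform a (e i + ∑ s, (Bform a (e i) (fb s)) • fb s) (fb t) = 0
    rw [map_add, LinearMap.add_apply, comb_fb_eval horm]
    ring
  set g : ℕ → ℕ → ℝ := fun i j => Bform a (Pe i) (Pe j) with hgdef
  have hgsym : ∀ i j, g i j = g j i := fun i j => Bform_symm hsym _ _
  have hgPSD : ∀ (n : ℕ) (x : Fin n → ℝ), 0 ≤ ∑ i, ∑ j, x i * x j * g i.1 j.1 := by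
    intro n x
    set z : ℕ →₀ ℝ := ∑ i : Fin n, x i • Pe i.1 with hz
    have hzperp : ∀ t, Bform a z (fb t) = 0 := by
      intro t
      rw [hz, Bform_comb_left,
        Finset.sum_congr rfl (fun i _ => by rw [hPperp i.1 t, mul_zero]),
        Finset.sum_const_zero]
    have hzz := hmax z hzperp
    have hexp : Bform a z z = ∑ i, ∑ j, x i * x j * g i.1 j.1 := by
      rw [hz, Bform_comb_left]
      refine Finset.sum_congr rfl fun i _ => ?_
      rw [Bform_comb_right, Finset.mul_sum]
      exact Finset.sum_congr rfl fun j _ => by rw [hgdef]; ring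
    rw [← hexp]
    exact hzz
  obtain ⟨u, hu⟩ := psd_kernel_gram g hgsym hgPSD
  set w : ℕ → EuclideanSpace ℝ (Fin k) := fun i => (WithLp.equiv 2 (Fin k → ℝ)).symm
    (fun t : Fin k => if ht : t.1 < m then Bform a (e i) (fb ⟨t.1, ht⟩) else 0) with hw
  have hwinner : ∀ i j, (inner ℝ (w i) (w j) : ℝ)
      = ∑ t : Fin m, Bform a (e i) (fb t) * Bform a (e j) (fb t) := by
    intro i j
    have h1 : (inner ℝ (w i) (w j) : ℝ) = ∑ t : Fin k, (w i) t * (w j) t := by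
      simp only [PiLp.inner_apply, RCLike.inner_apply, conj_trivial]
      exact Finset.sum_congr rfl fun t _ => mul_comm _ _
    rw [h1]
    set F : ℕ → ℝ := fun t => if ht : t < m then
      Bform a (e i) (fb ⟨t,ht⟩) * Bform a (e j) (fb ⟨t,ht⟩) else 0 with hF
    have h2 : ∀ t : Fin k, (w i) t * (w j) t = F t.1 := by
      intro t
      show (if ht : t.1 < m then Bform a (e i) (fb ⟨t.1, ht⟩) else 0)
        * (if ht : t.1 < m then Bform a (e j) (fb ⟨t.1, ht⟩) else 0) = F t.1
      simp only [hF]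
      by_cases ht : t.1 < m
      · rw [dif_pos ht, dif_pos ht, dif_pos ht]
      · rw [dif_neg ht, dif_neg ht, dif_neg ht, mul_zero]
    rw [Finset.sum_congr rfl (fun t _ => h2 t)]
    rw [Fin.sum_univ_eq_sum_range F k]
    rw [← Finset.sum_subset (Finset.range_subset_range.mpr hmk)
      (fun t _ htm => by simp only [hF]; exact dif_neg (by simpa using htm))]
    rw [← Fin.sum_univ_eq_sum_range F m]
    refine Finset.sum_congr rfl fun t _ => ?_
    simp only [hF]
    rw [dif_pos t.2]
  refine ⟨u, w, fun i j => ?_⟩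
  have hBee : Bform a (e i) (e j) = a i j := by
    rw [he]
    rw [Bform_single_single]
    ring
  have t1 : Bform a (e i) (∑ t, (Bform a (e j) (fb t)) • fb t)
      = ∑ t, Bform a (e j) (fb t) * Bform a (e i) (fb t) :=
    Bform_comb_right a _ _ _
  have t2 : Bform a (∑ t, (Bform a (e i) (fb t)) • fb t) (e j)
      = ∑ t, Bform a (e i) (fb t) * Bform a (e j) (fb t) := by
    rw [Bform_comb_left]
    exact Finset.sum_congr rfl fun t _ => by rw [Bform_symm hsym (fb t) (e j)]
  have t3 := comb_fb_comb horm (fun t => Bform a (e i) (fb t)) (fun t => Bform a (e j) (fb t))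
  have hQ : g i j = a i j + ∑ t, Bform a (e i) (fb t) * Bform a (e j) (fb t) := by
    rw [hgdef]
    show Bform a (e i + ∑ t, (Bform a (e i) (fb t)) • fb t)
      (e j + ∑ t, (Bform a (e j) (fb t)) • fb t) = _
    have expand : Bform a (e i + ∑ t, (Bform a (e i) (fb t)) • fb t)
        (e j + ∑ t, (Bform a (e j) (fb t)) • fb t)
        = Bform a (e i) (e j) + Bform a (e i) (∑ t, (Bform a (e j) (fb t)) • fb t)
          + Bform a (∑ t, (Bform a (e i) (fb t)) • fb t) (e j)
          + Bform a (∑ t, (Bform a (e i) (fb t)) • fb t)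
              (∑ t, (Bform a (e j) (fb t)) • fb t) := by
      simp only [map_add, LinearMap.add_apply]
      ring
    rw [expand, hBee, t1, t2, t3]
    have hcomm : ∑ t, Bform a (e j) (fb t) * Bform a (e i) (fb t)
        = ∑ t, Bform a (e i) (fb t) * Bform a (e j) (fb t) :=
      Finset.sum_congr rfl fun t _ => mul_comm _ _
    rw [hcomm]
    ring
  rw [hu i j, hwinner i j, hQ]
  ring
end
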